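/- For every real z ∈ (0,1), 𝔓_h(z) + 𝔓_h(1−z) = 1; that is, (3Γ(2/3)/Γ(1/3)²) · [z^{1/3} · ₂F₁(1/3,2/3;4/3;z) + (1−z)^{1/3} · ₂F₁(1/3,2/3;4/3;1−z)] = 1. -/

import Mathlib

open scoped BigOperators

/-- Rising factorial (Pochhammer symbol) `(x)_k = x(x+1)⋯(x+k-1)`. -/
noncomputable def pochR (x : ℝ) (k : ℕ) : ℝ := ∏ i ∈ Finset.range k, (x + i)

/-- The Gauss hypergeometric series `₂F₁(a,b;c;z)`. -/
noncomputable def F21R (a b c z : ℝ) : ℝ :=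
  ∑' k : ℕ, pochR a k * pochR b k / (pochR c k * (Nat.factorial k : ℝ)) * z ^ k

/-- The generalized hypergeometric series `₃F₂(a₁,a₂,a₃;b₁,b₂;z)`. -/
noncomputable def F32R (a₁ a₂ a₃ b₁ b₂ z : ℝ) : ℝ :=
  ∑' k : ℕ, pochR a₁ k * pochR a₂ k * pochR a₃ k /
      (pochR b₁ k * pochR b₂ k * (Nat.factorial k : ℝ)) * z ^ k

/-- Cardy's horizontal crossing function `𝔓_h`. -/
noncomputable def Ph (z : ℝ) : ℝ :=
  3 * Real.Gamma (2/3) / (Real.Gamma (1/3)) ^ 2 * z ^ ((1:ℝ)/3) *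
    F21R (1/3) (2/3) (4/3) z

/-- Watts's horizontal-vertical crossing function `𝔓_hv`. -/
noncomputable def Phv (z : ℝ) : ℝ :=
  Ph z - Real.sqrt 3 / (2 * Real.pi) * z * F32R 1 1 (4/3) 2 (5/3) z

/-- Cardy's cluster-number function `𝔑_h`. -/
noncomputable def Nh (z : ℝ) : ℝ :=
  1/2 - Real.sqrt 3 / (4 * Real.pi) *
    (Real.log (1 - z) + (1 - z) * F32R 1 1 (4/3) 2 (5/3) (1 - z))

namespace CardyAux

lemma pochR_zero (x : ℝ) : pochR x 0 = 1 := by simp [pochR]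

lemma pochR_succ (x : ℝ) (k : ℕ) : pochR x (k+1) = pochR x k * (x + k) := by
  simp [pochR, Finset.prod_range_succ]

lemma pochR_succ' (x : ℝ) (k : ℕ) : pochR x (k+1) = x * pochR (x+1) k := by
  simp only [pochR, Finset.prod_range_succ']
  rw [mul_comm]
  congr 1
  · simp
  · exact Finset.prod_congr rfl (by intro i _; push_cast; ring)

lemma pochR_pos {x : ℝ} (hx : 0 < x) (k : ℕ) : 0 < pochR x k := by
  apply Finset.prod_pos
  intro i _
  positivity

/-- coefficients of ₂F₁(1/3,2/3;4/3;·) -/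
noncomputable def ca (k : ℕ) : ℝ :=
  pochR (1/3) k * pochR (2/3) k / (pochR (4/3) k * (Nat.factorial k : ℝ))

/-- coefficients of (1-z)^{-2/3} -/
noncomputable def cb (k : ℕ) : ℝ := pochR (2/3) k / (Nat.factorial k : ℝ)

lemma ca_pos (k : ℕ) : 0 < ca k := by
  have h1 := pochR_pos (by norm_num : (0:ℝ) < 1/3) k
  have h2 := pochR_pos (by norm_num : (0:ℝ) < 2/3) k
  have h3 := pochR_pos (by norm_num : (0:ℝ) < 4/3) k
  have h4 : (0:ℝ) < (Nat.factorial k : ℝ) := by positivity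
  exact div_pos (mul_pos h1 h2) (mul_pos h3 h4)

lemma cb_pos (k : ℕ) : 0 < cb k := by
  have h2 := pochR_pos (by norm_num : (0:ℝ) < 2/3) k
  have h4 : (0:ℝ) < (Nat.factorial k : ℝ) := by positivity
  exact div_pos h2 h4

lemma ca_succ (k : ℕ) :
    ca (k+1) = ca k * ((1/3 + k) * (2/3 + k) / ((4/3 + k) * (k+1))) := by
  have h3 := (pochR_pos (by norm_num : (0:ℝ) < 4/3) k).ne'
  have h4 : ((Nat.factorial k : ℝ)) ≠ 0 := by positivity
  have h5 : ((4:ℝ)/3 + k) ≠ 0 := by positivity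
  have h6 : ((k:ℝ)+1) ≠ 0 := by positivity
  simp only [ca, pochR_succ, Nat.factorial_succ]
  push_cast
  field_simp

lemma cb_succ (k : ℕ) : cb (k+1) = cb k * ((2/3 + k) / (k+1)) := by
  have h4 : ((Nat.factorial k : ℝ)) ≠ 0 := by positivity
  have h6 : ((k:ℝ)+1) ≠ 0 := by positivity
  simp only [cb, pochR_succ, Nat.factorial_succ]
  push_cast
  rw [div_mul_div_comm, div_eq_div_iff (by positivity) (by positivity)]
  ring

lemma ca_le_one (k : ℕ) : ca k ≤ 1 := by
  induction k with
  | zero => simp [ca, pochR_zero]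
  | succ k ih =>
    rw [ca_succ]
    have hr : (1/3 + (k:ℝ)) * (2/3 + k) / ((4/3 + k) * (k+1)) ≤ 1 := by
      rw [div_le_one (by positivity)]
      nlinarith [Nat.cast_nonneg (α := ℝ) k]
    calc ca k * ((1/3 + (k:ℝ)) * (2/3 + k) / ((4/3 + k) * (k+1)))
        ≤ ca k * 1 := by
          apply mul_le_mul_of_nonneg_left hr (ca_pos k).le
      _ ≤ 1 := by simpa using ih

lemma cb_le_one (k : ℕ) : cb k ≤ 1 := by
  induction k with
  | zero => simp [cb, pochR_zero]
  | succ k ih =>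
    rw [cb_succ]
    have hr : ((2:ℝ)/3 + k) / (k+1) ≤ 1 := by
      rw [div_le_one (by positivity)]
      linarith [Nat.cast_nonneg (α := ℝ) k]
    calc cb k * ((2/3 + (k:ℝ)) / (k+1))
        ≤ cb k * 1 := mul_le_mul_of_nonneg_left hr (cb_pos k).le
      _ ≤ 1 := by simpa using ih

/-- key identity:  (k + 1/3) aₖ = (1/3) bₖ -/
lemma key_ab (k : ℕ) : ((k:ℝ) + 1/3) * ca k = (1/3) * cb k := by
  have e1 : pochR (1/3) k * (1/3 + (k:ℝ)) = (1/3) * pochR (4/3) k := by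
    have := pochR_succ (1/3) k
    rw [pochR_succ' (1/3) k] at this
    have h43 : (1:ℝ)/3 + 1 = 4/3 := by norm_num
    rw [h43] at this
    linarith [this]
  have h3 := (pochR_pos (by norm_num : (0:ℝ) < 4/3) k).ne'
  have h4 : ((Nat.factorial k : ℝ)) ≠ 0 := by positivity
  simp only [ca, cb]
  have step : ((k:ℝ) + 1/3) * (pochR (1/3) k * pochR (2/3) k / (pochR (4/3) k * (Nat.factorial k : ℝ)))
      = (pochR (1/3) k * (1/3 + (k:ℝ))) * pochR (2/3) k / (pochR (4/3) k * (Nat.factorial k : ℝ)) := by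
    ring
  rw [step, e1]
  field_simp

/-- key recurrence for b: (k+1) b_{k+1} = (k + 2/3) b_k -/
lemma key_b (k : ℕ) : ((k:ℝ) + 1) * cb (k+1) = ((k:ℝ) + 2/3) * cb k := by
  rw [cb_succ]
  have h6 : ((k:ℝ)+1) ≠ 0 := by positivity
  field_simp
  ring

lemma quart_summable {s : ℝ} (hs : |s| < 1) :
    Summable (fun n : ℕ => ((n:ℝ)+1)^4 * s^n) := by
  have hs' : ‖s‖ < 1 := by simpa [Real.norm_eq_abs] using hs
  have h4 := summable_pow_mul_geometric_of_norm_lt_one (R := ℝ) 4 hs'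
  have h3 := summable_pow_mul_geometric_of_norm_lt_one (R := ℝ) 3 hs'
  have h2 := summable_pow_mul_geometric_of_norm_lt_one (R := ℝ) 2 hs'
  have h1 := summable_pow_mul_geometric_of_norm_lt_one (R := ℝ) 1 hs'
  have h0 := summable_pow_mul_geometric_of_norm_lt_one (R := ℝ) 0 hs'
  have := (h4.add (h3.mul_left 4)).add ((h2.mul_left 6).add ((h1.mul_left 4).add h0))
  refine this.congr fun n => ?_
  push_cast
  ring

lemma summable_weighted {d : ℕ → ℝ} (hd : ∀ k, |d k| ≤ 8*((k:ℝ)+1)^4) {w : ℝ}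
    (hw : |w| < 1) : Summable (fun k => d k * w ^ k) := by
  have h' : Summable (fun n : ℕ => 8 * (((n:ℝ)+1)^4 * |w|^n)) :=
    (quart_summable (s := |w|) (by simpa using hw)).mul_left 8
  refine Summable.of_norm_bounded h' fun k => ?_
  rw [norm_mul, Real.norm_eq_abs, Real.norm_eq_abs, abs_pow]
  calc |d k| * |w|^k ≤ (8*((k:ℝ)+1)^4) * |w|^k :=
        mul_le_mul_of_nonneg_right (hd k) (by positivity)
    _ = 8 * (((k:ℝ)+1)^4 * |w|^k) := by ring

lemma cube_le (k : ℕ) : ((k:ℝ)+1) * ((k:ℝ)+2)^3 ≤ 8*((k:ℝ)+1)^4 := by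
  have e : ((k:ℝ)+2)^3 ≤ (2*((k:ℝ)+1))^3 :=
    pow_le_pow_left₀ (by positivity) (by linarith) 3
  have h1 : (0:ℝ) ≤ (k:ℝ)+1 := by positivity
  nlinarith [e, h1]

/-- termwise derivative of a power series, in shifted form -/
lemma hasDerivAt_ps {c : ℕ → ℝ} (hc : ∀ k, |c k| ≤ ((k:ℝ)+1)^3) {y : ℝ}
    (hy : |y| < 1) :
    HasDerivAt (fun z => ∑' k : ℕ, c k * z ^ k)
      (∑' k : ℕ, ((k:ℝ)+1) * c (k+1) * y ^ k) y := by
  set r : ℝ := (1 + |y|)/2 with hrdef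
  have hy0 : 0 ≤ |y| := abs_nonneg y
  have hr0 : 0 < r := by rw [hrdef]; linarith
  have hr1 : r < 1 := by rw [hrdef]; linarith
  have hyr : |y| < r := by rw [hrdef]; linarith
  set u : ℕ → ℝ := fun n => (n:ℝ) * ((n:ℝ)+1)^3 * r^(n-1) with hu_def
  have hu : Summable u := by
    rw [← summable_nat_add_iff 1]
    have : Summable (fun n : ℕ => (((n:ℝ)+1) * ((n:ℝ)+2)^3) * r^n) := by
      refine summable_weighted (fun k => ?_) (by rw [abs_of_pos hr0]; exact hr1)
      rw [abs_of_nonneg (by positivity)]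
      exact cube_le k
    refine this.congr fun n => ?_
    simp only [hu_def, Nat.add_sub_cancel]
    push_cast
    ring
  have key : HasDerivAt (fun z => ∑' k : ℕ, c k * z ^ k)
      (∑' k : ℕ, c k * ((k:ℝ) * y ^ (k-1))) y := by
    refine hasDerivAt_tsum_of_isPreconnected (u := u)
      (g := fun n z => c n * z ^ n)
      (g' := fun n x => c n * ((n:ℝ) * x ^ (n-1)))
      hu (isOpen_Ioo (a := -r) (b := r))
      (convex_Ioo _ _).isPreconnected (fun n x _ => ?_) (fun n x hx => ?_)
      (y₀ := 0) ?_ ?_ ?_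
    · exact (hasDerivAt_pow n x).const_mul (c n)
    · rw [Real.norm_eq_abs]
      simp only [hu_def]
      rw [abs_mul, abs_mul, Nat.abs_cast, abs_pow]
      have hxr : |x| ≤ r := by
        rw [abs_le]; exact ⟨hx.1.le, hx.2.le⟩
      have hp : |x| ^ (n-1) ≤ r ^ (n-1) := pow_le_pow_left₀ (abs_nonneg x) hxr _
      calc |c n| * ((n:ℝ) * |x|^(n-1)) ≤ ((n:ℝ)+1)^3 * ((n:ℝ) * r^(n-1)) := by
            apply mul_le_mul (hc n)
              (mul_le_mul_of_nonneg_left hp (Nat.cast_nonneg n))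
              (by positivity) (by positivity)
        _ = (n:ℝ) * ((n:ℝ)+1)^3 * r^(n-1) := by ring
    · constructor <;> [linarith; linarith]
    · refine summable_of_ne_finset_zero (s := {0}) fun n hn => ?_
      have : n ≠ 0 := by simpa using hn
      simp [zero_pow this]
    · rw [Set.mem_Ioo]
      constructor
      · linarith [neg_abs_le y]
      · linarith [le_abs_self y]
  convert key using 1
  have hf : Summable (fun k : ℕ => c k * ((k:ℝ) * y ^ (k-1))) := by
    rw [← summable_nat_add_iff 1]
    have : Summable (fun k : ℕ => (c (k+1) * ((k:ℝ)+1)) * y^k) := by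
      refine summable_weighted (fun k => ?_) hy
      rw [abs_mul, abs_of_nonneg (show (0:ℝ) ≤ (k:ℝ)+1 by positivity)]
      calc |c (k+1)| * ((k:ℝ)+1) ≤ ((k:ℝ)+2)^3 * ((k:ℝ)+1) := by
            apply mul_le_mul_of_nonneg_right _ (by positivity)
            have := hc (k+1); push_cast at this; linarith
        _ ≤ 8*((k:ℝ)+1)^4 := by have := cube_le k; nlinarith []
    refine this.congr fun n => ?_
    simp only [Nat.add_sub_cancel]
    push_cast
    ring
  rw [Summable.tsum_eq_zero_add hf]
  simp only [Nat.cast_zero, zero_mul, mul_zero, zero_add, Nat.add_sub_cancel]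
  refine tsum_congr fun k => ?_
  push_cast
  ring

/-- summability of the power series itself -/
lemma summable_ps {c : ℕ → ℝ} (hc : ∀ k, |c k| ≤ ((k:ℝ)+1)^3) {w : ℝ}
    (hw : |w| < 1) : Summable (fun k => c k * w ^ k) := by
  refine summable_weighted (fun k => ?_) hw
  calc |c k| ≤ ((k:ℝ)+1)^3 := hc k
    _ ≤ 8*((k:ℝ)+1)^4 := by nlinarith [pow_le_pow_right₀ (show (1:ℝ) ≤ (k:ℝ)+1 by linarith [Nat.cast_nonneg (α := ℝ) k]) (show 3 ≤ 4 by norm_num), pow_nonneg (show (0:ℝ) ≤ (k:ℝ)+1 by positivity) 3]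

/-- shift-back lemma: y * ∑ (k+1) c(k+1) y^k = ∑ k c k y^k. -/
lemma shift_back {c : ℕ → ℝ} (hc : ∀ k, |c k| ≤ ((k:ℝ)+1)^2) {y : ℝ}
    (hy : |y| < 1) :
    y * ∑' k : ℕ, ((k:ℝ)+1) * c (k+1) * y ^ k = ∑' k : ℕ, (k:ℝ) * c k * y ^ k := by
  have hg : Summable (fun k : ℕ => ((k:ℝ)+1) * c (k+1) * y ^ k) := by
    refine summable_weighted (fun k => ?_) hy
    rw [abs_mul, abs_of_nonneg (show (0:ℝ) ≤ (k:ℝ)+1 by positivity)]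
    have h1 : |c (k+1)| ≤ ((k:ℝ)+2)^2 := by have := hc (k+1); push_cast at this; linarith
    have hk : (0:ℝ) ≤ (k:ℝ) := Nat.cast_nonneg k
    have e1 : ((k:ℝ)+2)^2 ≤ 4*((k:ℝ)+1)^2 := by nlinarith [hk]
    calc ((k:ℝ)+1) * |c (k+1)| ≤ ((k:ℝ)+1) * ((k:ℝ)+2)^2 :=
          mul_le_mul_of_nonneg_left h1 (by positivity)
      _ ≤ ((k:ℝ)+1) * (4*((k:ℝ)+1)^2) := mul_le_mul_of_nonneg_left e1 (by positivity)
      _ ≤ 8*((k:ℝ)+1)^4 := by nlinarith [hk, pow_nonneg (show (0:ℝ) ≤ (k:ℝ)+1 by positivity) 3]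
  have hf : Summable (fun k : ℕ => (k:ℝ) * c k * y ^ k) := by
    rw [← summable_nat_add_iff 1]
    refine (hg.mul_left y).congr fun n => ?_
    push_cast
    ring
  rw [Summable.tsum_eq_zero_add hf]
  simp only [Nat.cast_zero, zero_mul, zero_add]
  rw [← tsum_mul_left]
  refine tsum_congr fun k => ?_
  push_cast
  ring


noncomputable def Sfun (z : ℝ) : ℝ := ∑' k : ℕ, cb k * z ^ k
noncomputable def Ffun (z : ℝ) : ℝ := ∑' k : ℕ, ca k * z ^ k

lemma casub (k : ℕ) : |ca k| ≤ ((k:ℝ)+1)^3 := by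
  rw [abs_of_pos (ca_pos k)]
  calc ca k ≤ 1 := ca_le_one k
    _ ≤ ((k:ℝ)+1)^3 := by
      have h1 : (1:ℝ) ≤ (k:ℝ)+1 := by linarith [Nat.cast_nonneg (α := ℝ) k]
      calc (1:ℝ) = 1^3 := by norm_num
        _ ≤ ((k:ℝ)+1)^3 := pow_le_pow_left₀ (by norm_num) h1 3

lemma cbsub (k : ℕ) : |cb k| ≤ ((k:ℝ)+1)^3 := by
  rw [abs_of_pos (cb_pos k)]
  calc cb k ≤ 1 := cb_le_one k
    _ ≤ ((k:ℝ)+1)^3 := by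
      have h1 : (1:ℝ) ≤ (k:ℝ)+1 := by linarith [Nat.cast_nonneg (α := ℝ) k]
      calc (1:ℝ) = 1^3 := by norm_num
        _ ≤ ((k:ℝ)+1)^3 := pow_le_pow_left₀ (by norm_num) h1 3

lemma cbsub2 (k : ℕ) : |cb k| ≤ ((k:ℝ)+1)^2 := by
  rw [abs_of_pos (cb_pos k)]
  calc cb k ≤ 1 := cb_le_one k
    _ ≤ ((k:ℝ)+1)^2 := by nlinarith [Nat.cast_nonneg (α := ℝ) k, sq_nonneg ((k:ℝ))]

lemma casub2 (k : ℕ) : |ca k| ≤ ((k:ℝ)+1)^2 := by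
  rw [abs_of_pos (ca_pos k)]
  calc ca k ≤ 1 := ca_le_one k
    _ ≤ ((k:ℝ)+1)^2 := by nlinarith [Nat.cast_nonneg (α := ℝ) k, sq_nonneg ((k:ℝ))]

lemma S_hasDerivAt {y : ℝ} (hy : |y| < 1) :
    HasDerivAt Sfun (∑' k : ℕ, ((k:ℝ)+1) * cb (k+1) * y ^ k) y :=
  hasDerivAt_ps cbsub hy

lemma F_hasDerivAt {y : ℝ} (hy : |y| < 1) :
    HasDerivAt Ffun (∑' k : ℕ, ((k:ℝ)+1) * ca (k+1) * y ^ k) y :=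
  hasDerivAt_ps casub hy

/-- the ODE for S: (1-y) S'(y) = (2/3) S(y) -/
lemma S_ode {y : ℝ} (hy : |y| < 1) :
    (1-y) * (∑' k : ℕ, ((k:ℝ)+1) * cb (k+1) * y ^ k) = (2/3) * Sfun y := by
  have hsb : Summable (fun k : ℕ => cb k * y ^ k) := summable_ps cbsub hy
  have hkb : Summable (fun k : ℕ => (k:ℝ) * cb k * y ^ k) := by
    refine summable_ps (c := fun k => (k:ℝ) * cb k) (fun k => ?_) hy
    rw [abs_mul, Nat.abs_cast]
    calc (k:ℝ) * |cb k| ≤ ((k:ℝ)+1) * ((k:ℝ)+1)^2 := by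
          apply mul_le_mul (by linarith [Nat.cast_nonneg (α := ℝ) k]) (cbsub2 k)
            (abs_nonneg _) (by positivity)
      _ = ((k:ℝ)+1)^3 := by ring
  have hDS : (∑' k : ℕ, ((k:ℝ)+1) * cb (k+1) * y ^ k)
      = (∑' k : ℕ, (k:ℝ) * cb k * y ^ k) + (2/3) * Sfun y := by
    rw [Sfun, ← tsum_mul_left, ← Summable.tsum_add hkb (hsb.mul_left (2/3))]
    refine tsum_congr fun k => ?_
    have hb := key_b k
    have : ((k:ℝ)+1) * cb (k+1) * y^k = (((k:ℝ) + 2/3) * cb k) * y^k := by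
      rw [show ((k:ℝ)+1) * cb (k+1) * y^k = (((k:ℝ)+1) * cb (k+1)) * y^k from by ring, hb]
    rw [this]
    ring
  have hshift := shift_back cbsub2 hy
  rw [sub_mul, one_mul, hshift, hDS]
  ring

lemma Sfun_zero : Sfun 0 = 1 := by
  rw [Sfun, tsum_eq_single 0 (fun k hk => by simp [zero_pow hk])]
  simp [cb, pochR_zero]

/-- closed form for S -/
lemma S_closed {z : ℝ} (hz : |z| < 1) : Sfun z = (1-z) ^ (-(2:ℝ)/3) := by
  set ψ : ℝ → ℝ := fun t => Sfun t * (1-t) ^ ((2:ℝ)/3) with hψdef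
  have hψderiv : ∀ y : ℝ, |y| < 1 → HasDerivAt ψ 0 y := by
    intro y hy
    have hpos : 0 < 1 - y := by
      have := le_abs_self y; linarith [abs_lt.mp hy]
    have h1 : HasDerivAt (fun t : ℝ => 1 - t) (-1) y := by
      simpa using (hasDerivAt_id y).const_sub 1
    have h2 : HasDerivAt (fun t : ℝ => (1-t) ^ ((2:ℝ)/3))
        (((2:ℝ)/3) * (1-y) ^ ((2:ℝ)/3 - 1) * (-1)) y :=
      (Real.hasDerivAt_rpow_const (x := 1-y) (p := (2:ℝ)/3)
        (Or.inl hpos.ne')).comp y h1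
    have h3 : HasDerivAt ψ ((∑' k : ℕ, ((k:ℝ)+1) * cb (k+1) * y ^ k) * (1-y) ^ ((2:ℝ)/3)
        + Sfun y * (((2:ℝ)/3) * (1-y) ^ ((2:ℝ)/3 - 1) * (-1))) y := (S_hasDerivAt hy).mul h2
    convert h3 using 1
    have hode := S_ode hy
    have hsplit : (1-y) ^ ((2:ℝ)/3) = (1-y) ^ ((2:ℝ)/3 - 1) * (1-y) := by
      have h' : (1-y) ^ ((2:ℝ)/3 - 1) * (1-y) ^ (1:ℝ) = (1-y) ^ ((2:ℝ)/3) := by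
        rw [← Real.rpow_add hpos]; norm_num
      rw [← h', Real.rpow_one]
    rw [hsplit]
    set DS := ∑' k : ℕ, ((k:ℝ)+1) * cb (k+1) * y ^ k
    have : DS * ((1-y) ^ ((2:ℝ)/3 - 1) * (1-y)) + Sfun y * ((2:ℝ)/3 * (1-y) ^ ((2:ℝ)/3-1) * (-1))
        = (1-y) ^ ((2:ℝ)/3 - 1) * ((1-y) * DS - (2/3) * Sfun y) := by ring
    rw [this, hode]
    ring
  have hconst : ψ z = ψ 0 := by
    rcases le_or_gt 0 z with h0 | h0
    · have : ∀ x ∈ Set.Icc (0:ℝ) z, ψ x = ψ 0 := by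
        apply constant_of_has_deriv_right_zero
        · intro x hx
          have hx1 : |x| < 1 := by
            rw [abs_lt]; constructor
            · linarith [hx.1]
            · have := abs_lt.mp hz; linarith [hx.2]
          exact (hψderiv x hx1).continuousAt.continuousWithinAt
        · intro x hx
          have hx1 : |x| < 1 := by
            rw [abs_lt]; constructor
            · linarith [hx.1]
            · have := abs_lt.mp hz; linarith [hx.2]
          exact (hψderiv x hx1).hasDerivWithinAt
      exact this z (Set.mem_Icc.mpr ⟨h0, le_refl z⟩)
    · have : ∀ x ∈ Set.Icc z (0:ℝ), ψ x = ψ z := by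
        apply constant_of_has_deriv_right_zero
        · intro x hx
          have hx1 : |x| < 1 := by
            rw [abs_lt]; constructor
            · have := abs_lt.mp hz; linarith [hx.1]
            · linarith [hx.2]
          exact (hψderiv x hx1).continuousAt.continuousWithinAt
        · intro x hx
          have hx1 : |x| < 1 := by
            rw [abs_lt]; constructor
            · have := abs_lt.mp hz; linarith [hx.1]
            · linarith [hx.2]
          exact (hψderiv x hx1).hasDerivWithinAt
      exact (this 0 (Set.mem_Icc.mpr ⟨h0.le, le_refl 0⟩)).symm
  have hψ0 : ψ 0 = 1 := by
    simp [hψdef, Sfun_zero, Real.one_rpow]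
  have hpos : 0 < 1 - z := by
    have := abs_lt.mp hz; linarith
  have hψz : Sfun z * (1-z) ^ ((2:ℝ)/3) = 1 := by
    have := hconst.trans hψ0
    simpa [hψdef] using this
  have hne : (1-z) ^ ((2:ℝ)/3) ≠ 0 := by positivity
  rw [show -(2:ℝ)/3 = -((2:ℝ)/3) from by norm_num, Real.rpow_neg hpos.le]
  field_simp at hψz ⊢
  linarith [hψz]


noncomputable def gfun (z : ℝ) : ℝ := z ^ ((1:ℝ)/3) * Ffun z

noncomputable def phi (t : ℝ) : ℝ := (1/3) * (t ^ (-(2:ℝ)/3) * (1-t) ^ (-(2:ℝ)/3))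

lemma phi_symm (t : ℝ) : phi (1 - t) = phi t := by
  rw [phi, phi, sub_sub_cancel]
  ring

lemma g_hasDerivAt {y : ℝ} (hy : y ∈ Set.Ioo (0:ℝ) 1) :
    HasDerivAt gfun (phi y) y := by
  obtain ⟨hy0, hy1⟩ := hy
  have hyabs : |y| < 1 := abs_lt.mpr ⟨by linarith, hy1⟩
  have h1 : HasDerivAt (fun t : ℝ => t ^ ((1:ℝ)/3)) (((1:ℝ)/3) * y ^ ((1:ℝ)/3 - 1)) y :=
    Real.hasDerivAt_rpow_const (Or.inl hy0.ne')
  have h2 := F_hasDerivAt hyabs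
  have h3 : HasDerivAt gfun (((1:ℝ)/3) * y ^ ((1:ℝ)/3 - 1) * Ffun y
      + y ^ ((1:ℝ)/3) * ∑' k : ℕ, ((k:ℝ)+1) * ca (k+1) * y ^ k) y := h1.mul h2
  convert h3 using 1
  set DF := ∑' k : ℕ, ((k:ℝ)+1) * ca (k+1) * y ^ k with hDF
  -- exponent rewrites
  have e1 : (1:ℝ)/3 - 1 = -(2:ℝ)/3 := by norm_num
  have e2 : y ^ ((1:ℝ)/3) = y ^ (-(2:ℝ)/3) * y := by
    have h' : y ^ (-(2:ℝ)/3) * y ^ (1:ℝ) = y ^ ((1:ℝ)/3) := by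
      rw [← Real.rpow_add hy0]; norm_num
    rw [← h', Real.rpow_one]
  -- the coefficient identity
  have hshift := shift_back casub2 hyabs
  have hka : Summable (fun k : ℕ => (k:ℝ) * ca k * y ^ k) := by
    refine summable_ps (c := fun k => (k:ℝ) * ca k) (fun k => ?_) hyabs
    rw [abs_mul, Nat.abs_cast]
    calc (k:ℝ) * |ca k| ≤ ((k:ℝ)+1) * ((k:ℝ)+1)^2 := by
          apply mul_le_mul (by linarith [Nat.cast_nonneg (α := ℝ) k]) (casub2 k)
            (abs_nonneg _) (by positivity)
      _ = ((k:ℝ)+1)^3 := by ring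
  have hsa : Summable (fun k : ℕ => ca k * y ^ k) := summable_ps casub hyabs
  have hcore : (1/3) * Ffun y + y * DF = (1/3) * Sfun y := by
    rw [hshift, Ffun, ← tsum_mul_left]
    rw [← Summable.tsum_add (hsa.mul_left (1/3)) hka]
    rw [Sfun, ← tsum_mul_left]
    refine tsum_congr fun k => ?_
    have := key_ab k
    have h' : (1/3) * (ca k * y^k) + (k:ℝ) * ca k * y^k = (((k:ℝ) + 1/3) * ca k) * y^k := by
      ring
    rw [h', this]
    ring
  rw [phi, ← S_closed hyabs]
  rw [e1, e2]
  have : y ^ (-(2:ℝ)/3) * y * DF = y ^ (-(2:ℝ)/3) * (y * DF) := by ring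
  calc (1:ℝ)/3 * (y ^ (-(2:ℝ)/3) * Sfun y)
      = y ^ (-(2:ℝ)/3) * ((1/3) * Sfun y) := by ring
    _ = y ^ (-(2:ℝ)/3) * ((1/3) * Ffun y + y * DF) := by rw [hcore]
    _ = 1/3 * y ^ (-(2:ℝ)/3) * Ffun y + y ^ (-(2:ℝ)/3) * y * DF := by ring

lemma F_contAt {x : ℝ} (hx : |x| < 1) : ContinuousAt Ffun x :=
  (F_hasDerivAt hx).continuousAt

lemma g_contOn {z : ℝ} (hz : z ∈ Set.Ioo (0:ℝ) 1) :
    ContinuousOn gfun (Set.Icc 0 z) := by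
  intro x hx
  have hx1 : |x| < 1 := by
    rw [abs_lt]; exact ⟨by linarith [hx.1], by linarith [hx.2, hz.2]⟩
  have h1 : ContinuousAt (fun t : ℝ => t ^ ((1:ℝ)/3)) x :=
    Real.continuousAt_rpow_const x ((1:ℝ)/3) (Or.inr (by norm_num))
  exact ((h1.mul (F_contAt hx1)).continuousWithinAt)

lemma phi_intble_left {z : ℝ} (hz : z ∈ Set.Ioo (0:ℝ) 1) :
    IntervalIntegrable phi MeasureTheory.volume 0 z := by
  have h1 : IntervalIntegrable (fun t : ℝ => t ^ (-(2:ℝ)/3)) MeasureTheory.volume 0 z :=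
    intervalIntegral.intervalIntegrable_rpow' (by norm_num)
  have h2 : ContinuousOn (fun t : ℝ => (1-t) ^ (-(2:ℝ)/3)) (Set.uIcc 0 z) := by
    intro x hx
    rw [Set.uIcc_of_le hz.1.le] at hx
    have : (1:ℝ) - x ≠ 0 := by
      have := hx.2; have := hz.2; intro h; linarith [sub_eq_zero.mp h]
    exact ((Real.continuousAt_rpow_const (1-x) _ (Or.inl this)).comp
      ((continuous_const.sub continuous_id).continuousAt : ContinuousAt (fun t : ℝ => 1 - t) x)).continuousWithinAt
  have h3 := (h1.mul_continuousOn h2).const_mul (1/3 : ℝ)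
  exact h3

lemma phi_intble_right {z : ℝ} (hz : z ∈ Set.Ioo (0:ℝ) 1) :
    IntervalIntegrable phi MeasureTheory.volume z 1 := by
  have h0 : (1-z) ∈ Set.Ioo (0:ℝ) 1 := ⟨by linarith [hz.2], by linarith [hz.1]⟩
  have h1 := (phi_intble_left h0).comp_sub_left 1
  have h2 : IntervalIntegrable (fun x => phi (1 - x)) MeasureTheory.volume z 1 := by
    simpa using h1.symm
  refine (h2.congr ?_)
  have : ∀ x, phi (1-x) = phi x := phi_symm
  intro x _
  simp [this x]

lemma g_eq_integral {z : ℝ} (hz : z ∈ Set.Ioo (0:ℝ) 1) :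
    ∫ t in (0:ℝ)..z, phi t = gfun z := by
  have h := intervalIntegral.integral_eq_sub_of_hasDerivAt_of_le hz.1.le
    (g_contOn hz) (fun x hx => g_hasDerivAt ⟨hx.1, lt_trans hx.2 hz.2⟩)
    (phi_intble_left hz)
  rw [h]
  have hg0 : gfun 0 = 0 := by
    rw [gfun, Real.zero_rpow (by norm_num : ((1:ℝ)/3) ≠ 0)]
    ring
  rw [hg0, sub_zero]

lemma beta_eval :
    ∫ t in (0:ℝ)..1, t ^ (-(2:ℝ)/3) * (1-t) ^ (-(2:ℝ)/3)
      = Real.Gamma (1/3) ^ 2 / Real.Gamma (2/3) := by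
  have h := Complex.Gamma_mul_Gamma_eq_betaIntegral (s := 1/3) (t := 1/3)
    (by norm_num) (by norm_num)
  have hbeta : Complex.betaIntegral (1/3) (1/3)
      = ((∫ t in (0:ℝ)..1, t ^ (-(2:ℝ)/3) * (1-t) ^ (-(2:ℝ)/3) : ℝ) : ℂ) := by
    rw [Complex.betaIntegral, ← intervalIntegral.integral_ofReal]
    refine intervalIntegral.integral_congr fun x hx => ?_
    rw [Set.uIcc_of_le (by norm_num : (0:ℝ) ≤ 1)] at hx
    rw [Complex.ofReal_mul, Complex.ofReal_cpow hx.1,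
      Complex.ofReal_cpow (by linarith [hx.2] : (0:ℝ) ≤ 1 - x)]
    push_cast
    norm_num
  rw [hbeta] at h
  have h23 : ((1:ℂ)/3 + 1/3) = (((2:ℝ)/3 : ℝ) : ℂ) := by push_cast; norm_num
  rw [h23, Complex.Gamma_ofReal] at h
  have h13 : ((1:ℂ)/3) = (((1:ℝ)/3 : ℝ) : ℂ) := by push_cast; norm_num
  rw [h13, Complex.Gamma_ofReal] at h
  have hne : Real.Gamma (2/3) ≠ 0 := (Real.Gamma_pos_of_pos (by norm_num)).ne'
  have := h
  rw [← Complex.ofReal_mul, ← Complex.ofReal_mul] at this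
  have h2 := Complex.ofReal_injective this
  field_simp at h2 ⊢
  nlinarith [h2]

lemma g_sum {z : ℝ} (hz : z ∈ Set.Ioo (0:ℝ) 1) :
    gfun z + gfun (1 - z) = (1/3) * (Real.Gamma (1/3) ^ 2 / Real.Gamma (2/3)) := by
  have h0 : (1-z) ∈ Set.Ioo (0:ℝ) 1 := ⟨by linarith [hz.2], by linarith [hz.1]⟩
  have I1 := g_eq_integral hz
  have I2 := g_eq_integral h0
  have I2' : ∫ t in z..(1:ℝ), phi t = ∫ t in (0:ℝ)..(1-z), phi t := by
    have e1 : ∫ t in z..(1:ℝ), phi t = ∫ t in z..(1:ℝ), phi (1 - t) :=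
      intervalIntegral.integral_congr fun x _ => (phi_symm x).symm
    rw [e1, intervalIntegral.integral_comp_sub_left (fun t => phi t) 1]
    norm_num
  have Iadd := intervalIntegral.integral_add_adjacent_intervals
    (phi_intble_left hz) (phi_intble_right hz)
  have Itot : ∫ t in (0:ℝ)..1, phi t = (1/3) * (Real.Gamma (1/3) ^ 2 / Real.Gamma (2/3)) := by
    simp only [phi]
    rw [intervalIntegral.integral_const_mul, beta_eval]
  rw [← I1, ← I2, ← I2', Iadd, Itot]

lemma Ffun_eq (w : ℝ) : Ffun w = F21R (1/3) (2/3) (4/3) w := rfl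

end CardyAux

/-- `𝔓_h(z) + 𝔓_h(1−z) = 1` for `z ∈ (0,1)`. -/
theorem stmt2 (z : ℝ) (hz : z ∈ Set.Ioo (0:ℝ) 1) : Ph z + Ph (1 - z) = 1 := by
  open CardyAux in
  have hPh : ∀ w : ℝ, Ph w =
      (3 * Real.Gamma (2/3) / Real.Gamma (1/3) ^ 2) * CardyAux.gfun w := by
    intro w
    rw [Ph, CardyAux.gfun, ← CardyAux.Ffun_eq]
    ring
  rw [hPh, hPh]
  have hsum := CardyAux.g_sum hz
  rw [← mul_add, hsum]
  have h13 : Real.Gamma (1/3) ≠ 0 := (Real.Gamma_pos_of_pos (by norm_num)).ne'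
  have h23 : Real.Gamma (2/3) ≠ 0 := (Real.Gamma_pos_of_pos (by norm_num)).ne'
  field_simp
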